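/- Let λ₁,λ₂,λ₃,λ₄ and λ̄₁,λ̄₂,λ̄₃,λ̄₄ be positive reals. Suppose A,B,C,D : [0,∞) → (0,∞) are differentiable and satisfy dA/dt = B/C + C/B + 2, dB/dt = C/A + D/C - B²/(AC), dC/dt = B/A + D/B - C²/(AB), dD/dt = -D²/(BC) with A(0)=λ₁, B(0)=λ₂, C(0)=λ₃, D(0)=λ₄, and suppose (as holds for these solutions) that A(t)/t → 4, B(t)/C(t) → 1 and B(t) → ∞ as t → ∞. Let Ā,B̄,C̄,D̄ satisfy the same ODE system with initial data λ̄₁,λ̄₂,λ̄₃,λ̄₄ and the same asymptotic properties. Then ((A-Ā)/A)² + ((B-B̄)/B)² + ((C-C̄)/C)² + ((D-D̄)/D)² tends to 0 as t → ∞ if and only if λ̄₂λ̄₃λ̄₄² = λ₂λ₃λ₄²; in particular λ̄₁, λ̄₂, λ̄₄ may be chosen arbitrarily, so the quasi-convergence class [g]_α is exactly a 3-parameter family. -/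

import Mathlib

open Filter Set Real

private lemma constOnIci {f : ℝ → ℝ}
    (hf : ∀ t ∈ Set.Ici (0:ℝ), HasDerivWithinAt f 0 (Set.Ici 0) t) :
    ∀ t ∈ Set.Ici (0:ℝ), f t = f 0 := by
  intro t ht
  rcases eq_or_lt_of_le (Set.mem_Ici.mp ht) with h | h
  · rw [← h]
  · exact constant_of_has_deriv_right_zero
      (fun x hx => ((hf x hx.1).continuousWithinAt).mono Set.Icc_subset_Ici_self)
      (fun x hx => (hf x hx.1).mono (Set.Ici_subset_Ici.mpr hx.1))
      t (Set.right_mem_Icc.mpr h.le)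

private lemma sys_facts (l2 l3 l4 : ℝ) (hl2 : 0 < l2) (hl3 : 0 < l3) (hl4 : 0 < l4)
    (A B C D : ℝ → ℝ)
    (hApos : ∀ t ∈ Set.Ici (0:ℝ), 0 < A t) (hBpos : ∀ t ∈ Set.Ici (0:ℝ), 0 < B t)
    (hCpos : ∀ t ∈ Set.Ici (0:ℝ), 0 < C t) (hDpos : ∀ t ∈ Set.Ici (0:ℝ), 0 < D t)
    (hB : ∀ t ∈ Set.Ici (0:ℝ),
      HasDerivWithinAt B (C t / A t + D t / C t - (B t) ^ 2 / (A t * C t)) (Set.Ici 0) t)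
    (hC : ∀ t ∈ Set.Ici (0:ℝ),
      HasDerivWithinAt C (B t / A t + D t / B t - (C t) ^ 2 / (A t * B t)) (Set.Ici 0) t)
    (hD : ∀ t ∈ Set.Ici (0:ℝ),
      HasDerivWithinAt D (-(D t) ^ 2 / (B t * C t)) (Set.Ici 0) t)
    (hB0 : B 0 = l2) (hC0 : C 0 = l3) (hD0 : D 0 = l4) :
    (∀ t ∈ Set.Ici (0:ℝ), B t * C t * D t ^ 2 = l2 * l3 * l4 ^ 2) ∧
    (∀ t ∈ Set.Ici (0:ℝ), (D t ^ 3)⁻¹ = (l4 ^ 3)⁻¹ + 3 / (l2 * l3 * l4 ^ 2) * t) := by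
  have hcons : ∀ t ∈ Set.Ici (0:ℝ), B t * C t * D t ^ 2 = l2 * l3 * l4 ^ 2 := by
    have hconst := constOnIci (f := fun t => B t * C t * D t ^ 2) ?_
    · intro t ht
      have := hconst t ht
      simp only [hB0, hC0, hD0] at this
      exact this
    · intro t ht
      have hA' := (hApos t ht).ne'
      have hB' := (hBpos t ht).ne'
      have hC' := (hCpos t ht).ne'
      have h1 := ((hB t ht).mul (hC t ht)).mul ((hD t ht).pow 2)
      refine h1.congr_deriv ?_
      simp only [Pi.mul_apply, Pi.pow_apply]
      field_simp
      ring
  refine ⟨hcons, ?_⟩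
  have hk : (0:ℝ) < l2 * l3 * l4 ^ 2 := by positivity
  have hconst := constOnIci (f := fun t => (D t ^ 3)⁻¹ - 3 / (l2 * l3 * l4 ^ 2) * t) ?_
  · intro t ht
    have h0 := hconst t ht
    simp only [hD0, mul_zero, sub_zero] at h0
    linarith [h0]
  · intro t ht
    have hB' := (hBpos t ht).ne'
    have hC' := (hCpos t ht).ne'
    have hD' := (hDpos t ht).ne'
    have hbc := hcons t ht
    have h1 := (((hD t ht).pow 3).inv (pow_ne_zero _ hD')).sub
      ((hasDerivWithinAt_id t (Set.Ici 0)).const_mul (3 / (l2 * l3 * l4 ^ 2)))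
    refine h1.congr_deriv ?_
    simp only [Pi.pow_apply]
    have hbc' : B t * C t = (l2 * l3 * l4 ^ 2) / D t ^ 2 := by
      rw [← hbc]; field_simp
    rw [hbc']
    field_simp [hbc']
    ring

private lemma ratio_tendsto (a b c d : ℝ) (hb : 0 < b) (hd : 0 < d) :
    Tendsto (fun t : ℝ => (a + b * t) / (c + d * t)) atTop (nhds (b / d)) := by
  have h1 : Tendsto (fun t : ℝ => (a / t + b) / (c / t + d)) atTop
      (nhds ((0 + b) / (0 + d))) := by
    exact ((tendsto_const_nhds.div_atTop tendsto_id).add tendsto_const_nhds).div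
      ((tendsto_const_nhds.div_atTop tendsto_id).add tendsto_const_nhds)
      (by simp [hd.ne'])
  rw [show (0 + b) / (0 + d) = b / d by ring_nf] at h1
  apply h1.congr'
  filter_upwards [eventually_gt_atTop (0:ℝ)] with t ht
  rw [div_add' _ _ _ ht.ne', div_add' _ _ _ ht.ne', div_div_div_cancel_right₀]
  exact ht.ne'

set_option maxHeartbeats 1000000


/-- class A7i: for solutions of the A7i Ricci-flow ODE system,
quasi-convergence in the same frame holds iff `λ̄₂λ̄₃λ̄₄² = λ₂λ₃λ₄²`;
`[g]_α` is a 3-parameter family. -/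
theorem stmt_9 (l1 l2 l3 l4 m1 m2 m3 m4 : ℝ)
    (hl1 : 0 < l1) (hl2 : 0 < l2) (hl3 : 0 < l3) (hl4 : 0 < l4)
    (hm1 : 0 < m1) (hm2 : 0 < m2) (hm3 : 0 < m3) (hm4 : 0 < m4)
    (A B C D Ab Bb Cb Db : ℝ → ℝ)
    (hApos : ∀ t ∈ Set.Ici (0:ℝ), 0 < A t) (hBpos : ∀ t ∈ Set.Ici (0:ℝ), 0 < B t)
    (hCpos : ∀ t ∈ Set.Ici (0:ℝ), 0 < C t) (hDpos : ∀ t ∈ Set.Ici (0:ℝ), 0 < D t)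
    (hAbpos : ∀ t ∈ Set.Ici (0:ℝ), 0 < Ab t) (hBbpos : ∀ t ∈ Set.Ici (0:ℝ), 0 < Bb t)
    (hCbpos : ∀ t ∈ Set.Ici (0:ℝ), 0 < Cb t) (hDbpos : ∀ t ∈ Set.Ici (0:ℝ), 0 < Db t)
    (hA : ∀ t ∈ Set.Ici (0:ℝ),
      HasDerivWithinAt A (B t / C t + C t / B t + 2) (Set.Ici 0) t)
    (hB : ∀ t ∈ Set.Ici (0:ℝ),
      HasDerivWithinAt B (C t / A t + D t / C t - (B t) ^ 2 / (A t * C t)) (Set.Ici 0) t)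
    (hC : ∀ t ∈ Set.Ici (0:ℝ),
      HasDerivWithinAt C (B t / A t + D t / B t - (C t) ^ 2 / (A t * B t)) (Set.Ici 0) t)
    (hD : ∀ t ∈ Set.Ici (0:ℝ),
      HasDerivWithinAt D (-(D t) ^ 2 / (B t * C t)) (Set.Ici 0) t)
    (hA0 : A 0 = l1) (hB0 : B 0 = l2) (hC0 : C 0 = l3) (hD0 : D 0 = l4)
    (hAlim : Filter.Tendsto (fun t => A t / t) Filter.atTop (nhds 4))
    (hBClim : Filter.Tendsto (fun t => B t / C t) Filter.atTop (nhds 1))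
    (hBlim : Filter.Tendsto B Filter.atTop Filter.atTop)
    (hAb : ∀ t ∈ Set.Ici (0:ℝ),
      HasDerivWithinAt Ab (Bb t / Cb t + Cb t / Bb t + 2) (Set.Ici 0) t)
    (hBb : ∀ t ∈ Set.Ici (0:ℝ),
      HasDerivWithinAt Bb (Cb t / Ab t + Db t / Cb t - (Bb t) ^ 2 / (Ab t * Cb t)) (Set.Ici 0) t)
    (hCb : ∀ t ∈ Set.Ici (0:ℝ),
      HasDerivWithinAt Cb (Bb t / Ab t + Db t / Bb t - (Cb t) ^ 2 / (Ab t * Bb t)) (Set.Ici 0) t)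
    (hDb : ∀ t ∈ Set.Ici (0:ℝ),
      HasDerivWithinAt Db (-(Db t) ^ 2 / (Bb t * Cb t)) (Set.Ici 0) t)
    (hAb0 : Ab 0 = m1) (hBb0 : Bb 0 = m2) (hCb0 : Cb 0 = m3) (hDb0 : Db 0 = m4)
    (hAblim : Filter.Tendsto (fun t => Ab t / t) Filter.atTop (nhds 4))
    (hBbClim : Filter.Tendsto (fun t => Bb t / Cb t) Filter.atTop (nhds 1))
    (hBblim : Filter.Tendsto Bb Filter.atTop Filter.atTop) :
    Filter.Tendsto (fun t : ℝ =>
        ((A t - Ab t) / A t) ^ 2 + ((B t - Bb t) / B t) ^ 2 +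
        ((C t - Cb t) / C t) ^ 2 + ((D t - Db t) / D t) ^ 2)
      Filter.atTop (nhds 0) ↔ m2 * m3 * m4 ^ 2 = l2 * l3 * l4 ^ 2 := by
  obtain ⟨hcons, hE⟩ := sys_facts l2 l3 l4 hl2 hl3 hl4 A B C D hApos hBpos hCpos hDpos
    hB hC hD hB0 hC0 hD0
  obtain ⟨hconsb, hEb⟩ := sys_facts m2 m3 m4 hm2 hm3 hm4 Ab Bb Cb Db hAbpos hBbpos hCbpos hDbpos
    hBb hCb hDb hBb0 hCb0 hDb0
  set k := l2 * l3 * l4 ^ 2 with hkdef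
  set kb := m2 * m3 * m4 ^ 2 with hkbdef
  have hk : 0 < k := by positivity
  have hkb : 0 < kb := by positivity
  have key : ∀ x : ℝ, 0 ≤ x → (x ^ (3:ℕ)) ^ ((3:ℝ)⁻¹) = x := fun x hx => by
    rw [show ((3:ℝ))⁻¹ = (((3:ℕ)):ℝ)⁻¹ by norm_num, Real.pow_rpow_inv_natCast hx (by norm_num)]
  set s : ℝ := (kb / k) ^ ((3:ℝ)⁻¹) with hsdef
  have hs : 0 < s := Real.rpow_pos_of_pos (by positivity) _
  have hs3 : s ^ (3:ℕ) = kb / k := by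
    rw [hsdef, show ((3:ℝ))⁻¹ = (((3:ℕ)):ℝ)⁻¹ by norm_num,
      Real.rpow_inv_natCast_pow (by positivity) (by norm_num)]
  set q : ℝ := Real.sqrt s with hqdef
  have hq : 0 < q := Real.sqrt_pos.mpr hs
  -- Db/D tends to s
  have hDrat : Filter.Tendsto (fun t => Db t / D t) Filter.atTop (nhds s) := by
    have h1 : Filter.Tendsto (fun t : ℝ => ((l4 ^ 3)⁻¹ + 3 / k * t) / ((m4 ^ 3)⁻¹ + 3 / kb * t))
        Filter.atTop (nhds ((3 / k) / (3 / kb))) := ratio_tendsto _ _ _ _ (by positivity) (by positivity)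
    have heq : ((3:ℝ) / k) / (3 / kb) = kb / k := by
      rw [div_div_div_comm]
      simp
    rw [heq] at h1
    have h2 := h1.rpow_const (p := (3:ℝ)⁻¹) (Or.inl (by positivity))
    apply h2.congr'
    filter_upwards [Filter.eventually_ge_atTop (0:ℝ)] with t ht
    have hD' := hDpos t ht
    have hDb' := hDbpos t ht
    have e1 : ((l4 ^ 3)⁻¹ + 3 / k * t) / ((m4 ^ 3)⁻¹ + 3 / kb * t) = (Db t / D t) ^ (3:ℕ) := by
      rw [← hE t ht, ← hEb t ht, div_pow, inv_div_inv]
    rw [e1, key _ (by positivity)]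
  have hDDrat : Filter.Tendsto (fun t => D t / Db t) Filter.atTop (nhds s⁻¹) := by
    have := hDrat.inv₀ hs.ne'
    simpa only [inv_div] using this
  -- (Bb*Cb)/(B*C) tends to s
  have hBCrat : Filter.Tendsto (fun t => (Bb t * Cb t) / (B t * C t)) Filter.atTop (nhds s) := by
    have h1 : Filter.Tendsto (fun t => kb / k * (D t / Db t) ^ 2) Filter.atTop
        (nhds (kb / k * (s⁻¹) ^ 2)) := tendsto_const_nhds.mul (hDDrat.pow 2)
    have hval : kb / k * (s⁻¹) ^ 2 = s := by
      rw [← hs3]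
      field_simp
    rw [hval] at h1
    apply h1.congr'
    filter_upwards [Filter.eventually_ge_atTop (0:ℝ)] with t ht
    have hB' := (hBpos t ht).ne'
    have hC' := (hCpos t ht).ne'
    have hD' := (hDpos t ht).ne'
    have hDb' := (hDbpos t ht).ne'
    have e1 : Bb t * Cb t = kb / Db t ^ 2 := by rw [← hconsb t ht]; field_simp
    have e2 : B t * C t = k / D t ^ 2 := by rw [← hcons t ht]; field_simp
    rw [e1, e2]
    field_simp
  have hCBlim : Filter.Tendsto (fun t => C t / B t) Filter.atTop (nhds 1) := by
    have := hBClim.inv₀ one_ne_zero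
    simpa only [inv_div, inv_one] using this
  have hCbBblim : Filter.Tendsto (fun t => Cb t / Bb t) Filter.atTop (nhds 1) := by
    have := hBbClim.inv₀ one_ne_zero
    simpa only [inv_div, inv_one] using this
  -- Bb/B tends to q
  have hBrat : Filter.Tendsto (fun t => Bb t / B t) Filter.atTop (nhds q) := by
    have h1 : Filter.Tendsto (fun t => (Bb t * Cb t) / (B t * C t) * ((Bb t / Cb t) * (C t / B t)))
        Filter.atTop (nhds (s * (1 * 1))) := hBCrat.mul (hBbClim.mul hCBlim)
    rw [show s * (1 * 1) = s by ring] at h1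
    have h2 : Filter.Tendsto (fun t => (Bb t / B t) ^ 2) Filter.atTop (nhds s) := by
      apply h1.congr'
      filter_upwards [Filter.eventually_ge_atTop (0:ℝ)] with t ht
      have hB' := (hBpos t ht).ne'
      have hC' := (hCpos t ht).ne'
      have hBb' := (hBbpos t ht).ne'
      have hCb' := (hCbpos t ht).ne'
      field_simp
    have h3 := h2.sqrt
    apply h3.congr'
    filter_upwards [Filter.eventually_ge_atTop (0:ℝ)] with t ht
    exact Real.sqrt_sq (div_nonneg (hBbpos t ht).le (hBpos t ht).le)
  -- Cb/C tends to q
  have hCrat : Filter.Tendsto (fun t => Cb t / C t) Filter.atTop (nhds q) := by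
    have h1 : Filter.Tendsto (fun t => (Bb t * Cb t) / (B t * C t) * ((Cb t / Bb t) * (B t / C t)))
        Filter.atTop (nhds (s * (1 * 1))) := hBCrat.mul (hCbBblim.mul hBClim)
    rw [show s * (1 * 1) = s by ring] at h1
    have h2 : Filter.Tendsto (fun t => (Cb t / C t) ^ 2) Filter.atTop (nhds s) := by
      apply h1.congr'
      filter_upwards [Filter.eventually_ge_atTop (0:ℝ)] with t ht
      have hB' := (hBpos t ht).ne'
      have hC' := (hCpos t ht).ne'
      have hBb' := (hBbpos t ht).ne'
      have hCb' := (hCbpos t ht).ne'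
      field_simp
    have h3 := h2.sqrt
    apply h3.congr'
    filter_upwards [Filter.eventually_ge_atTop (0:ℝ)] with t ht
    exact Real.sqrt_sq (div_nonneg (hCbpos t ht).le (hCpos t ht).le)
  -- Ab/A tends to 1
  have hArat : Filter.Tendsto (fun t => Ab t / A t) Filter.atTop (nhds 1) := by
    have h1 := hAblim.div hAlim (by norm_num)
    rw [show (4:ℝ) / 4 = 1 by norm_num] at h1
    apply h1.congr'
    filter_upwards [Filter.eventually_gt_atTop (0:ℝ)] with t ht
    have hA' := (hApos t ht.le).ne'
    rw [Pi.div_apply]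
    field_simp
  -- the full sum tends to (1-1)^2 + (1-q)^2 + (1-q)^2 + (1-s)^2
  have hS : Filter.Tendsto (fun t : ℝ =>
      ((A t - Ab t) / A t) ^ 2 + ((B t - Bb t) / B t) ^ 2 +
      ((C t - Cb t) / C t) ^ 2 + ((D t - Db t) / D t) ^ 2)
      Filter.atTop (nhds (((1:ℝ) - 1) ^ 2 + (1 - q) ^ 2 + (1 - q) ^ 2 + (1 - s) ^ 2)) := by
    have h1 : Filter.Tendsto (fun t : ℝ =>
        ((1:ℝ) - Ab t / A t) ^ 2 + (1 - Bb t / B t) ^ 2 +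
        (1 - Cb t / C t) ^ 2 + (1 - Db t / D t) ^ 2) Filter.atTop
        (nhds (((1:ℝ) - 1) ^ 2 + (1 - q) ^ 2 + (1 - q) ^ 2 + (1 - s) ^ 2)) :=
      ((((tendsto_const_nhds.sub hArat).pow 2).add
      ((tendsto_const_nhds.sub hBrat).pow 2)).add
      ((tendsto_const_nhds.sub hCrat).pow 2)).add
      ((tendsto_const_nhds.sub hDrat).pow 2)
    apply h1.congr'
    filter_upwards [Filter.eventually_ge_atTop (0:ℝ)] with t ht
    have hA' := (hApos t ht).ne'
    have hB' := (hBpos t ht).ne'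
    have hC' := (hCpos t ht).ne'
    have hD' := (hDpos t ht).ne'
    rw [sub_div, sub_div, sub_div, sub_div, div_self hA', div_self hB', div_self hC',
      div_self hD']
  constructor
  · intro h
    have hL := tendsto_nhds_unique h hS
    have h2 : (1 - s) ^ 2 = 0 := by nlinarith [sq_nonneg (1 - q), sq_nonneg (1 - s)]
    have hs1 : s = 1 := by nlinarith
    have hkk : kb / k = 1 := by rw [← hs3, hs1]; norm_num
    exact (div_eq_one_iff_eq hk.ne').mp hkk
  · intro h
    have hs1 : s = 1 := by rw [hsdef, h, div_self hk.ne', Real.one_rpow]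
    have hq1 : q = 1 := by rw [hqdef, hs1, Real.sqrt_one]
    rw [hs1, hq1] at hS
    norm_num at hS
    exact hS
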